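/- Let Θ = [θmin, θmax] ⊂ ℝ and let Q : Θ → ℝ be nondecreasing with 0 ≤ Q ≤ 1. Define the payment P(r) = r·Q(r) − ∫_{θmin}^{r} Q(s) ds − θmin·Q(θmin). Then for all true values θ ∈ Θ and all reports r ∈ Θ: θ·Q(θ) − P(θ) ≥ θ·Q(r) − P(r). That is, truthful reporting maximizes the consumer's utility under the Myerson payment rule. -/
import Mathlib


open intervalIntegral

/-- With a nondecreasing interim allocation `Q` taking values in `[0,1]` and the
Myerson payment `P(r) = r·Q(r) − ∫_{θmin}^r Q − θmin·Q(θmin)`, truthful reporting maximizes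
utility: `θ·Q(θ) − P(θ) ≥ θ·Q(r) − P(r)` for all true values `θ` and reports `r` in `Θ`. -/
theorem stmt8 (θmin θmax : ℝ) (hθ : θmin ≤ θmax) (Q P : ℝ → ℝ)
    (hmono : MonotoneOn Q (Set.Icc θmin θmax))
    (hQ0 : ∀ x ∈ Set.Icc θmin θmax, 0 ≤ Q x)
    (hQ1 : ∀ x ∈ Set.Icc θmin θmax, Q x ≤ 1)
    (hP : ∀ r ∈ Set.Icc θmin θmax,
      P r = r * Q r - (∫ s in θmin..r, Q s) - θmin * Q θmin) :
    ∀ θ ∈ Set.Icc θmin θmax, ∀ r ∈ Set.Icc θmin θmax,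
      θ * Q r - P r ≤ θ * Q θ - P θ := by
  intro θ hθm r hrm
  have hint : ∀ a ∈ Set.Icc θmin θmax, ∀ b ∈ Set.Icc θmin θmax,
      IntervalIntegrable Q MeasureTheory.volume a b := by
    intro a ha b hb
    exact (hmono.mono (Set.uIcc_subset_Icc ha hb)).intervalIntegrable
  rw [hP θ hθm, hP r hrm]
  have key : (θ - r) * Q r ≤ ∫ s in r..θ, Q s := by
    rcases le_total r θ with h | h
    · have : ∫ s in r..θ, Q r ≤ ∫ s in r..θ, Q s := by
        apply intervalIntegral.integral_mono_on h intervalIntegrable_const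
          (hint r hrm θ hθm)
        intro x hx
        exact hmono hrm ⟨le_trans hrm.1 hx.1, le_trans hx.2 hθm.2⟩ hx.1
      simpa [mul_comm] using this
    · have : ∫ s in θ..r, Q s ≤ ∫ s in θ..r, Q r := by
        apply intervalIntegral.integral_mono_on h (hint θ hθm r hrm)
          intervalIntegrable_const
        intro x hx
        exact hmono ⟨le_trans hθm.1 hx.1, le_trans hx.2 hrm.2⟩ hrm hx.2
      rw [intervalIntegral.integral_const] at this
      have := neg_le_neg this
      rw [← intervalIntegral.integral_symm] at this
      simp only [smul_eq_mul] at this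
      linarith
  have hsplit : (∫ s in θmin..r, Q s) + ∫ s in r..θ, Q s = ∫ s in θmin..θ, Q s :=
    intervalIntegral.integral_add_adjacent_intervals (hint θmin ⟨le_refl _, hθ⟩ r hrm)
      (hint r hrm θ hθm)
  nlinarith
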